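/- Let t and c be classifiers on a finite universe X of n ≥ 2 individuals, let δ ≥ 0, and suppose c is δ-faithful to t and c is δ-balanced. Then d_H(c,t) ≤ √(2δ)·n or d_H(c,f(t)) ≤ √(2δ)·n, where d_H denotes Hamming distance. -/

import Mathlib

open Finset

namespace Oracle

variable {n : ℕ}

def zeros (c : Fin n → Bool) : Finset (Fin n) := Finset.univ.filter (fun i => c i = false)

def ones (c : Fin n → Bool) : Finset (Fin n) := Finset.univ.filter (fun i => c i = true)

def flip (c : Fin n → Bool) : Fin n → Bool := fun i => !(c i)

/-- Transportation cost `C(t → c)`: the fraction, among all `n.choose 2` unordered pairs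
of distinct individuals, of pairs treated the same by `t` but differently by `c`.
Unordered pairs `{i,j}` with `i ≠ j` are represented as ordered pairs with `p.1 < p.2`. -/
noncomputable def cost (t c : Fin n → Bool) : ℝ :=
  ((Finset.univ.filter
      (fun p : Fin n × Fin n => p.1 < p.2 ∧ t p.1 = t p.2 ∧ c p.1 ≠ c p.2)).card : ℝ)
    / (n.choose 2 : ℝ)

/-- A classifier is `δ`-balanced if `|c⁰| > √(2δ)·n` and `|c¹| > √(2δ)·n`. -/
def balanced (δ : ℝ) (c : Fin n → Bool) : Prop :=
  Real.sqrt (2*δ) * n < ((zeros c).card : ℝ) ∧ Real.sqrt (2*δ) * n < ((ones c).card : ℝ)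

/-- Hamming distance between classifiers. -/
def hamming (u v : Fin n → Bool) : ℕ := (Finset.univ.filter (fun i => u i ≠ v i)).card

set_option maxHeartbeats 1000000 in
/-- If `c` is `δ`-faithful to `t` and `δ`-balanced, then `c` is within Hamming distance
`√(2δ)·n` of `t` or of `flip t`. -/
theorem faithful_balanced_hamming {n : ℕ} (hn : 2 ≤ n) {δ : ℝ} (hδ : 0 ≤ δ)
    (t c : Fin n → Bool) (hfaithful : cost t c ≤ δ) (hbal : balanced δ c) :
    ((hamming c t : ℝ) ≤ Real.sqrt (2*δ) * n) ∨
    ((hamming c (flip t) : ℝ) ≤ Real.sqrt (2*δ) * n) := by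
  classical
  by_contra hcon
  push_neg at hcon
  obtain ⟨h1, h2⟩ := hcon
  set s := Real.sqrt (2*δ) with hs
  set A0 := univ.filter (fun i : Fin n => c i = false ∧ t i = false) with hA0
  set A1 := univ.filter (fun i : Fin n => c i = false ∧ t i = true) with hA1
  set B0 := univ.filter (fun i : Fin n => c i = true ∧ t i = false) with hB0
  set B1 := univ.filter (fun i : Fin n => c i = true ∧ t i = true) with hB1
  set F := univ.filter
      (fun p : Fin n × Fin n => p.1 < p.2 ∧ t p.1 = t p.2 ∧ c p.1 ≠ c p.2) with hF
  -- cardinality decompositions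
  have ham1 : hamming c t = A1.card + B0.card := by
    rw [hamming, ← card_union_of_disjoint]
    · congr 1
      ext i
      simp only [hA1, hB0, mem_filter, mem_union, mem_univ, true_and]
      cases hci : c i <;> cases hti : t i <;> simp
    · rw [disjoint_left]
      intro i hi hj
      simp only [hA1, hB0, mem_filter] at hi hj
      simp [hi.2.1] at hj
  have ham2 : hamming c (flip t) = A0.card + B1.card := by
    rw [hamming, ← card_union_of_disjoint]
    · congr 1
      ext i
      simp only [hA0, hB1, mem_filter, mem_union, mem_univ, true_and, flip]
      cases hci : c i <;> cases hti : t i <;> simp [hci, hti]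
    · rw [disjoint_left]
      intro i hi hj
      simp only [hA0, hB1, mem_filter] at hi hj
      simp [hi.2.1] at hj
  have hz : (zeros c).card = A0.card + A1.card := by
    rw [zeros, ← card_union_of_disjoint]
    · congr 1
      ext i
      simp only [hA0, hA1, mem_filter, mem_union, mem_univ, true_and]
      cases hci : c i <;> cases hti : t i <;> simp
    · rw [disjoint_left]
      intro i hi hj
      simp only [hA0, hA1, mem_filter] at hi hj
      simp [hi.2.2] at hj
  have ho : (ones c).card = B0.card + B1.card := by
    rw [ones, ← card_union_of_disjoint]
    · congr 1
      ext i
      simp only [hB0, hB1, mem_filter, mem_union, mem_univ, true_and]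
      cases hci : c i <;> cases hti : t i <;> simp
    · rw [disjoint_left]
      intro i hi hj
      simp only [hB0, hB1, mem_filter] at hi hj
      simp [hi.2.2] at hj
  -- key counting: A0.card * B0.card + A1.card * B1.card ≤ F.card
  have hcount : A0.card * B0.card + A1.card * B1.card ≤ F.card := by
    have hdisj : Disjoint (A0 ×ˢ B0) (A1 ×ˢ B1) := by
      rw [disjoint_left]
      rintro ⟨i, j⟩ hi hj
      simp only [mem_product, hA0, hA1, hB0, hB1, mem_filter] at hi hj
      simp [hi.1.2.2] at hj
    rw [← card_product, ← card_product, ← card_union_of_disjoint hdisj]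
    apply card_le_card_of_injOn (fun p => if p.1 < p.2 then p else (p.2, p.1))
    · rintro ⟨i, j⟩ hp
      have hmem : c i = false ∧ c j = true ∧ t i = t j := by
        change (i, j) ∈ (A0 ×ˢ B0 ∪ A1 ×ˢ B1) at hp
        simp only [mem_union, mem_product, hA0, hA1, hB0, hB1, mem_filter,
          mem_univ, true_and] at hp
        rcases hp with ⟨⟨h1, h2⟩, h3, h4⟩ | ⟨⟨h1, h2⟩, h3, h4⟩ <;>
          exact ⟨h1, h3, by rw [h2, h4]⟩
      obtain ⟨hci, hcj, hts⟩ := hmem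
      have hne : i ≠ j := by
        intro h; rw [h, hcj] at hci; simp at hci
      by_cases hlt : i < j
      · simp only [hlt, if_pos]
        show (i, j) ∈ F
        simp only [hF, mem_filter, mem_univ, true_and]
        exact ⟨hlt, hts, by simp [hci, hcj]⟩
      · have hlt' : j < i := lt_of_le_of_ne (not_lt.mp hlt) hne.symm
        simp only [hlt, if_neg, not_false_iff]
        show (j, i) ∈ F
        simp only [hF, mem_filter, mem_univ, true_and]
        exact ⟨hlt', hts.symm, by simp [hci, hcj]⟩
    · rintro ⟨i, j⟩ hp ⟨i', j'⟩ hq heq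
      have hij : c i = false ∧ c j = true := by
        simp only [mem_coe, mem_union, mem_product, hA0, hA1, hB0, hB1, mem_filter,
          mem_univ, true_and] at hp
        rcases hp with ⟨⟨h1, _⟩, h3, _⟩ | ⟨⟨h1, _⟩, h3, _⟩ <;> exact ⟨h1, h3⟩
      have hij' : c i' = false ∧ c j' = true := by
        simp only [mem_coe, mem_union, mem_product, hA0, hA1, hB0, hB1, mem_filter,
          mem_univ, true_and] at hq
        rcases hq with ⟨⟨h1, _⟩, h3, _⟩ | ⟨⟨h1, _⟩, h3, _⟩ <;> exact ⟨h1, h3⟩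
      by_cases hlt : i < j <;> by_cases hlt' : i' < j' <;>
        simp only [hlt, hlt', if_pos, if_neg, not_false_iff, Prod.mk.injEq] at heq
      · exact Prod.ext heq.1 heq.2
      · exfalso; rw [← heq.1] at hij'; simp [hij.1] at hij'
      · exfalso; rw [← heq.1] at hij'; simp [hij.2] at hij'
      · exact Prod.ext heq.2 heq.1
  -- translate cost bound
  have hchoose_pos : 0 < (n.choose 2 : ℝ) := by
    have : 0 < n.choose 2 := Nat.choose_pos hn
    exact_mod_cast this
  have hFle : (F.card : ℝ) ≤ δ * (n.choose 2 : ℝ) := by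
    have := hfaithful
    rw [cost, div_le_iff₀ hchoose_pos] at this
    exact this
  -- real number setup
  set z0 := (A0.card : ℝ); set z1 := (A1.card : ℝ)
  set o0 := (B0.card : ℝ); set o1 := (B1.card : ℝ)
  have hz0 : 0 ≤ z0 := Nat.cast_nonneg _
  have hz1 : 0 ≤ z1 := Nat.cast_nonneg _
  have ho0 : 0 ≤ o0 := Nat.cast_nonneg _
  have ho1 : 0 ≤ o1 := Nat.cast_nonneg _
  have hP : z0 * o0 + z1 * o1 ≤ δ * (n.choose 2 : ℝ) := by
    refine le_trans ?_ hFle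
    have : ((A0.card * B0.card + A1.card * B1.card : ℕ) : ℝ) ≤ (F.card : ℝ) := by
      exact_mod_cast hcount
    push_cast at this
    linarith
  have hH1 : s * n < z1 + o0 := by
    have := h1; rw [ham1] at this; push_cast at this; linarith
  have hH2 : s * n < z0 + o1 := by
    have := h2; rw [ham2] at this; push_cast at this; linarith
  have hB1' : s * n < z0 + z1 := by
    have := hbal.1; rw [hz] at this; push_cast at this; linarith
  have hB2' : s * n < o0 + o1 := by
    have := hbal.2; rw [ho] at this; push_cast at this; linarith
  -- bound on choose 2
  have hch : (n.choose 2 : ℝ) = n * (n - 1) / 2 := by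
    rw [Nat.cast_choose_two]
  have hs2 : s ^ 2 = 2 * δ := Real.sq_sqrt (by linarith)
  have hsnn : 0 ≤ s := Real.sqrt_nonneg _
  have hn1 : (1 : ℝ) ≤ (n : ℝ) := by exact_mod_cast le_trans (by norm_num) hn
  have hupper : δ * (n.choose 2 : ℝ) ≤ (s * n / 2) ^ 2 := by
    rw [hch]
    have : (s * n / 2) ^ 2 = s ^ 2 * n ^ 2 / 4 := by ring
    rw [this, hs2]
    nlinarith [sq_nonneg ((n : ℝ))]
  set a := s * n / 2 with ha
  have hann : 0 ≤ a := by positivity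
  -- case analysis: show a^2 < z0*o0 + z1*o1
  have key : a ^ 2 < z0 * o0 + z1 * o1 := by
    have c1 : a < z0 ∨ a < z1 := by by_contra h; push_neg at h; rw [ha] at h; linarith [h.1, h.2]
    have c2 : a < o0 ∨ a < o1 := by by_contra h; push_neg at h; rw [ha] at h; linarith [h.1, h.2]
    have c3 : a < z1 ∨ a < o0 := by by_contra h; push_neg at h; rw [ha] at h; linarith [h.1, h.2]
    have c4 : a < z0 ∨ a < o1 := by by_contra h; push_neg at h; rw [ha] at h; linarith [h.1, h.2]
    have case00 : a < z0 → a < o0 → a ^ 2 < z0 * o0 + z1 * o1 := by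
      intro hx hy
      nlinarith [mul_nonneg hz1 ho1, mul_lt_mul'' hx hy hann hann]
    have case11 : a < z1 → a < o1 → a ^ 2 < z0 * o0 + z1 * o1 := by
      intro hx hy
      nlinarith [mul_nonneg hz0 ho0, mul_lt_mul'' hx hy hann hann]
    rcases c1 with hc1 | hc1 <;> rcases c2 with hc2 | hc2
    · exact case00 hc1 hc2
    · rcases c3 with hc3 | hc3
      · exact case11 hc3 hc2
      · exact case00 hc1 hc3
    · rcases c4 with hc4 | hc4
      · exact case00 hc4 hc2
      · exact case11 hc1 hc4
    · exact case11 hc1 hc2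
  linarith [le_trans hP hupper]

end Oracle
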